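/- For each real α with 0 < α < 1: lim_{n→∞} (1/n)·∑_{j=1}^{⌊αn⌋} log(2·sin(jπ/n)) = −(1/π)·Λ(πα). [The limiting form of the quantum-factorial asymptotics used in the final step of the proof of Theorem 6.2.] -/

import Mathlib

open Finset Filter Real

/-- The sine factorial `(k)!_n = ∏_{j=1}^k 2 sin(jπ/n)`. -/
noncomputable def sf (n k : ℕ) : ℝ :=
  ∏ j ∈ Finset.Icc 1 k, 2 * Real.sin (j * Real.pi / n)

/-- The Lobachevsky function `Λ(x) = -∫₀ˣ log|2 sin t| dt`. -/
noncomputable def lob (x : ℝ) : ℝ := -∫ t in (0:ℝ)..x, Real.log |2 * Real.sin t|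

open MeasureTheory Set intervalIntegral Topology

namespace SineFact

noncomputable def f (s : ℝ) : ℝ := Real.log (2 * Real.sin (Real.pi * s))

lemma sin_pos' {s : ℝ} (hs : 0 < s) (hs1 : s < 1) : 0 < Real.sin (Real.pi * s) :=
  Real.sin_pos_of_pos_of_lt_pi (by positivity)
    (by simpa using (mul_lt_of_lt_one_right Real.pi_pos hs1))

lemma f_le {s : ℝ} (hs : 0 < s) (hs1 : s < 1) : f s ≤ Real.log 2 := by
  have h := sin_pos' hs hs1
  have h2 := Real.sin_le_one (Real.pi * s)
  exact Real.log_le_log (by linarith) (by linarith)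

lemma f_min {s c a : ℝ} (hs : 0 < s) (hsc : s ≤ c) (hca : c ≤ a) (ha1 : a < 1) :
    min (f s) (f a) ≤ f c := by
  have hsa : s ≤ a := hsc.trans hca
  have hc0 : 0 < c := hs.trans_le hsc
  have hc1 : c < 1 := lt_of_le_of_lt hca ha1
  have ha0 : 0 < a := hc0.trans_le hca
  have hps : 0 < Real.sin (Real.pi * s) := sin_pos' hs (hsa.trans_lt ha1)
  have hpa : 0 < Real.sin (Real.pi * a) := sin_pos' ha0 ha1
  have hpc : 0 < Real.sin (Real.pi * c) := sin_pos' hc0 hc1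
  have hconc : ConcaveOn ℝ (Icc 0 Real.pi) Real.sin := strictConcaveOn_sin_Icc.concaveOn
  have hmem : ∀ x : ℝ, 0 < x → x < 1 → Real.pi * x ∈ Icc 0 Real.pi := fun x hx hx1 =>
    ⟨by positivity, by simpa using (mul_le_of_le_one_right Real.pi_pos.le hx1.le)⟩
  have hseg : Real.pi * c ∈ segment ℝ (Real.pi * s) (Real.pi * a) := by
    rw [segment_eq_Icc (by nlinarith [Real.pi_pos] : Real.pi * s ≤ Real.pi * a)]
    constructor <;> nlinarith [Real.pi_pos]
  have hmin : min (Real.sin (Real.pi * s)) (Real.sin (Real.pi * a)) ≤ Real.sin (Real.pi * c) :=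
    hconc.ge_on_segment (hmem s hs (hsa.trans_lt ha1)) (hmem a ha0 ha1) hseg
  rcases le_total (Real.sin (Real.pi * s)) (Real.sin (Real.pi * a)) with h | h
  · have : f s ≤ f c := Real.log_le_log (by linarith) (by rw [min_eq_left h] at hmin; linarith)
    exact le_trans (min_le_left _ _) this
  · have : f a ≤ f c := Real.log_le_log (by linarith) (by rw [min_eq_right h] at hmin; linarith)
    exact le_trans (min_le_right _ _) this

lemma f_lb {s a : ℝ} (hs : 0 < s) (hsa : s ≤ a) (ha1 : a < 1) :
    Real.log s - |f a| ≤ f s := by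
  have hls : Real.log s ≤ 0 := Real.log_nonpos hs.le (by linarith)
  rcases le_or_gt s (1/2) with hhalf | hhalf
  · -- sin (π s) ≥ 2 s
    have hsin : 2 * s ≤ Real.sin (Real.pi * s) := by
      have := Real.mul_le_sin (x := Real.pi * s) (by positivity)
        (by nlinarith [Real.pi_pos])
      have hpi := Real.pi_pos
      calc 2 * s = 2 / Real.pi * (Real.pi * s) := by field_simp
        _ ≤ Real.sin (Real.pi * s) := this
    have h1 : Real.log s ≤ f s := by
      have : s ≤ 2 * Real.sin (Real.pi * s) := by linarith
      exact Real.log_le_log hs this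
    have := abs_nonneg (f a)
    linarith
  · have hmin := f_min (s := 1/2) (c := s) (a := a) (by norm_num) hhalf.le hsa ha1
    have hf12 : f (1/2 : ℝ) = Real.log 2 := by
      unfold f
      rw [show Real.pi * (1/2 : ℝ) = Real.pi / 2 by ring, Real.sin_pi_div_two]
      norm_num
    have h2 : -|f a| ≤ min (f (1/2 : ℝ)) (f a) := by
      apply le_min
      · rw [hf12]; have := abs_nonneg (f a); have := Real.log_nonneg (by norm_num : (1:ℝ) ≤ 2); linarith
      · exact neg_abs_le _
    linarith

lemma f_contAt {s : ℝ} (hs : 0 < s) (hs1 : s < 1) : ContinuousAt f s := by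
  have h := sin_pos' hs hs1
  apply ContinuousAt.comp (Real.continuousAt_log (by positivity))
  fun_prop

lemma abs_log_le {s : ℝ} (hs : 0 < s) (hs1 : s ≤ 1) :
    |Real.log s| ≤ 2 * s ^ (-2⁻¹ : ℝ) := by
  rw [abs_of_nonpos (Real.log_nonpos hs.le hs1)]
  have h1 : Real.log (s ^ (-2⁻¹ : ℝ)) ≤ s ^ (-2⁻¹ : ℝ) - 1 :=
    Real.log_le_sub_one_of_pos (by positivity)
  rw [Real.log_rpow hs] at h1
  have h2 : (0:ℝ) ≤ s ^ (-2⁻¹ : ℝ) := by positivity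
  linarith

end SineFact

namespace SineFact

lemma step_integral {n : ℕ} (hn : 0 < n) (m : ℕ) :
    IntegrableOn (fun s => f ((⌈(n:ℝ) * s⌉₊ : ℝ) / n)) (Ioc (0:ℝ) ((m:ℝ) / n)) ∧
    ∫ s in Ioc (0:ℝ) ((m:ℝ) / n), f ((⌈(n:ℝ) * s⌉₊ : ℝ) / n)
      = ∑ j ∈ Finset.Icc 1 m, f ((j:ℝ) / n) / n := by
  have hn' : (0:ℝ) < n := by exact_mod_cast hn
  induction m with
  | zero => simp
  | succ m ih =>
    have hle : (m:ℝ)/n ≤ ((m:ℝ)+1)/n := by gcongr; linarith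
    have hEq : EqOn (fun s => f ((⌈(n:ℝ) * s⌉₊ : ℝ) / n)) (fun _ => f (((m:ℝ)+1)/n))
        (Ioc ((m:ℝ)/n) (((m:ℝ)+1)/n)) := by
      intro s hs
      have h1 : (m:ℝ) < n * s := by
        rw [mul_comm]; exact (div_lt_iff₀ hn').mp hs.1
      have h2 : (n:ℝ) * s ≤ (m:ℝ) + 1 := by
        rw [mul_comm]; exact (le_div_iff₀ hn').mp hs.2
      have hceil : ⌈(n:ℝ) * s⌉₊ = m + 1 := by
        rw [Nat.ceil_eq_iff (Nat.succ_ne_zero m)]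
        constructor
        · simpa using h1
        · push_cast; exact h2
      simp only [hceil]
      push_cast
      rfl
    have hIntPiece : IntegrableOn (fun s => f ((⌈(n:ℝ) * s⌉₊ : ℝ) / n))
        (Ioc ((m:ℝ)/n) (((m:ℝ)+1)/n)) :=
      (integrableOn_const measure_Ioc_lt_top.ne).congr_fun hEq.symm measurableSet_Ioc
    have hunion : Ioc (0:ℝ) (((m:ℝ)+1)/n) = Ioc (0:ℝ) ((m:ℝ)/n) ∪ Ioc ((m:ℝ)/n) (((m:ℝ)+1)/n) :=
      (Ioc_union_Ioc_eq_Ioc (by positivity) hle).symm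
    have hInt : IntegrableOn (fun s => f ((⌈(n:ℝ) * s⌉₊ : ℝ) / n)) (Ioc (0:ℝ) (((m:ℝ)+1)/n)) := by
      rw [hunion]; exact ih.1.union hIntPiece
    have hPieceVal : ∫ s in Ioc ((m:ℝ)/n) (((m:ℝ)+1)/n), f ((⌈(n:ℝ) * s⌉₊ : ℝ) / n)
        = f (((m:ℝ)+1)/n) / n := by
      rw [setIntegral_congr_fun measurableSet_Ioc hEq, setIntegral_const,
        Real.volume_real_Ioc_of_le hle, smul_eq_mul]
      field_simp
      ring
    constructor
    · push_cast; exact hInt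
    · push_cast
      have hIcc : ∀ k : ℕ, Finset.Icc 1 k = Finset.Ioc 0 k := fun k => by
        ext x; simp only [Finset.mem_Icc, Finset.mem_Ioc]; omega
      rw [hunion, setIntegral_union (Set.Ioc_disjoint_Ioc_of_le le_rfl) measurableSet_Ioc ih.1 hIntPiece,
        ih.2, hPieceVal, hIcc, hIcc, Finset.sum_Ioc_succ_top (Nat.zero_le m)]
      push_cast
      rfl

end SineFact

theorem sine_factorial_limit (α : ℝ) (h0 : 0 < α) (h1 : α < 1) :
    Filter.Tendsto
      (fun n : ℕ => (1 / (n : ℝ)) *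
        ∑ j ∈ Finset.Icc 1 ⌊α * (n : ℝ)⌋₊, Real.log (2 * Real.sin (j * Real.pi / n)))
      Filter.atTop (nhds (-(1 / Real.pi) * lob (Real.pi * α))) := by
  classical
  set μ : Measure ℝ := volume.restrict (Ioc 0 α) with hμ
  set h : ℕ → ℝ → ℝ := fun n s => SineFact.f ((⌈(n:ℝ) * s⌉₊ : ℝ) / n) with hh
  set m : ℕ → ℕ := fun n => ⌊α * (n:ℝ)⌋₊ with hm
  set F : ℕ → ℝ → ℝ := fun n => (Ioc (0:ℝ) ((m n : ℝ)/n)).indicator (h n) with hF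
  -- basic facts
  have hmα : ∀ n : ℕ, (m n : ℝ) / n ≤ α := by
    intro n
    rcases Nat.eq_zero_or_pos n with rfl | hn
    · simp [hm]; positivity
    · have hn' : (0:ℝ) < n := by exact_mod_cast hn
      rw [div_le_iff₀ hn']
      exact (Nat.floor_le (by positivity)).trans (by rw [mul_comm])
  have hf_meas : Measurable SineFact.f := by
    apply Real.measurable_log.comp
    fun_prop
  have hmeas : ∀ n, Measurable (h n) := by
    intro n
    apply hf_meas.comp
    exact ((measurable_from_top.comp (Nat.measurable_ceil.comp
      (measurable_const_mul _))).div_const _)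
  -- the bound
  set K : ℝ := |SineFact.f α| + Real.log 2 with hK
  set bound : ℝ → ℝ := fun s => 2 * s ^ (-2⁻¹ : ℝ) + K with hbound
  have hlog2 : (0:ℝ) ≤ Real.log 2 := Real.log_nonneg (by norm_num)
  have hbound_int : Integrable bound μ := by
    have hb1 : IntervalIntegrable (fun s : ℝ => s ^ (-2⁻¹ : ℝ)) volume 0 α :=
      intervalIntegrable_rpow' (by norm_num)
    rw [intervalIntegrable_iff_integrableOn_Ioc_of_le h0.le] at hb1
    exact (hb1.const_mul 2).add ((integrableOn_const measure_Ioc_lt_top.ne))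
  have hF_meas : ∀ n, AEStronglyMeasurable (F n) μ := fun n =>
    (((hmeas n).indicator measurableSet_Ioc).aestronglyMeasurable)
  have h_bound : ∀ n, ∀ᵐ s ∂μ, ‖F n s‖ ≤ bound s := by
    intro n
    filter_upwards [ae_restrict_mem measurableSet_Ioc] with s hs
    have hrpow : (0:ℝ) ≤ 2 * s ^ (-2⁻¹ : ℝ) := by
      have := Real.rpow_nonneg hs.1.le (-2⁻¹ : ℝ); linarith
    by_cases hmem : s ∈ Ioc (0:ℝ) ((m n : ℝ)/n)
    · have hn : 0 < n := by
        rcases Nat.eq_zero_or_pos n with rfl | hn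
        · simp [hm] at hmem
        · exact hn
      have hn' : (0:ℝ) < n := by exact_mod_cast hn
      set c : ℝ := (⌈(n:ℝ) * s⌉₊ : ℝ) / n with hc
      have hsc : s ≤ c := by
        rw [hc, le_div_iff₀ hn', mul_comm]
        exact Nat.le_ceil _
      have hns : (n:ℝ) * s ≤ (m n : ℝ) := by
        have := (le_div_iff₀ hn').mp hmem.2
        linarith [mul_comm s (n:ℝ)]
      have hceil_le : (⌈(n:ℝ) * s⌉₊ : ℝ) ≤ (m n : ℝ) := by
        exact_mod_cast Nat.ceil_le.2 hns
      have hcα : c ≤ α := by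
        refine le_trans ?_ (hmα n)
        rw [hc]
        gcongr
      have hs0 : 0 < s := hs.1
      have hc0 : 0 < c := hs0.trans_le hsc
      have hc1 : c < 1 := lt_of_le_of_lt hcα h1
      have hFe : F n s = SineFact.f c := by
        rw [hF]
        simp only [indicator_of_mem hmem]
        rfl
      have hfc_le : SineFact.f c ≤ Real.log 2 := SineFact.f_le hc0 hc1
      have hmin : min (SineFact.f s) (SineFact.f α) ≤ SineFact.f c :=
        SineFact.f_min hs0 hsc hcα h1
      have hfs_lb : Real.log s - |SineFact.f α| ≤ SineFact.f s :=
        SineFact.f_lb hs0 hs.2 h1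
      have hlogs : Real.log s ≤ 0 := Real.log_nonpos hs0.le (hs.2.trans h1.le)
      have hfa_lb : Real.log s - |SineFact.f α| ≤ SineFact.f α := by
        have := neg_abs_le (SineFact.f α); linarith
      have hfc_lb : Real.log s - |SineFact.f α| ≤ SineFact.f c :=
        le_trans (le_min hfs_lb hfa_lb) hmin
      have habs : |Real.log s| ≤ 2 * s ^ (-2⁻¹ : ℝ) :=
        SineFact.abs_log_le hs0 (hs.2.trans h1.le)
      have h5 : -Real.log s ≤ |Real.log s| := by rw [abs_of_nonpos hlogs]
      rw [hFe, Real.norm_eq_abs]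
      rw [abs_le]
      constructor
      · simp only [hbound, hK]
        linarith [abs_nonneg (SineFact.f α)]
      · simp only [hbound, hK]
        linarith [abs_nonneg (Real.log s), abs_nonneg (SineFact.f α)]
    · rw [hF]
      simp only [indicator_of_notMem hmem, norm_zero]
      have := abs_nonneg (SineFact.f α)
      simp only [hbound, hK]
      linarith
  have hne : ∀ᵐ s ∂μ, s ≠ α := by
    apply ae_restrict_of_ae
    rw [ae_iff]
    simp only [not_not]
    simpa [Set.setOf_eq_eq_singleton] using Real.volume_singleton (a := α)
  have h_lim : ∀ᵐ s ∂μ, Tendsto (fun n => F n s) atTop (𝓝 (SineFact.f s)) := by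
    filter_upwards [ae_restrict_mem measurableSet_Ioc, hne] with s hs hsne
    have hsα : s < α := lt_of_le_of_ne hs.2 hsne
    have htd : Tendsto (fun n : ℕ => ((m n : ℝ))/n) atTop (𝓝 α) :=
      (tendsto_nat_floor_mul_div_atTop h0.le).comp tendsto_natCast_atTop_atTop
    have hev : ∀ᶠ n : ℕ in atTop, s ≤ (m n : ℝ)/n := htd.eventually (eventually_ge_nhds hsα)
    have hub : Tendsto (fun n : ℕ => s + 1/(n:ℝ)) atTop (𝓝 s) := by
      simpa using (tendsto_const_nhds (x := s)).add tendsto_one_div_atTop_nhds_zero_nat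
    have hceil : Tendsto (fun n : ℕ => (⌈(n:ℝ) * s⌉₊ : ℝ)/n) atTop (𝓝 s) := by
      apply tendsto_of_tendsto_of_tendsto_of_le_of_le' tendsto_const_nhds hub
      · filter_upwards [eventually_ge_atTop 1] with n hn
        have hn' : (0:ℝ) < n := by exact_mod_cast hn
        rw [le_div_iff₀ hn', mul_comm]; exact Nat.le_ceil _
      · filter_upwards [eventually_ge_atTop 1] with n hn
        have hn' : (0:ℝ) < n := by exact_mod_cast hn
        rw [div_le_iff₀ hn']
        have h2 : (⌈(n:ℝ)*s⌉₊ : ℝ) < (n:ℝ)*s + 1 :=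
          Nat.ceil_lt_add_one (mul_nonneg hn'.le hs.1.le)
        have h3 : (s + 1/(n:ℝ)) * n = n * s + 1 := by field_simp
        linarith
    have hcont : ContinuousAt SineFact.f s := SineFact.f_contAt hs.1 (hsα.trans h1)
    have hmain : Tendsto (fun n : ℕ => SineFact.f ((⌈(n:ℝ)*s⌉₊:ℝ)/n)) atTop
        (𝓝 (SineFact.f s)) := hcont.tendsto.comp hceil
    apply hmain.congr'
    filter_upwards [hev] with n hn
    have hmem : s ∈ Set.Ioc (0:ℝ) ((m n:ℝ)/n) := ⟨hs.1, hn⟩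
    rw [hF]
    simp only [Set.indicator_of_mem hmem]
    rfl
  have hDCT := MeasureTheory.tendsto_integral_of_dominated_convergence bound hF_meas
    hbound_int h_bound h_lim
  have hval : ∫ s, SineFact.f s ∂μ = -(1/Real.pi) * lob (Real.pi * α) := by
    have hpi := Real.pi_pos
    have hEq : EqOn (fun s => Real.log |2 * Real.sin (Real.pi * s)|) SineFact.f
        (uIcc (0:ℝ) α) := by
      intro s hsm
      rw [uIcc_of_le h0.le] at hsm
      have h1' : 0 ≤ Real.sin (Real.pi * s) :=
        Real.sin_nonneg_of_nonneg_of_le_pi (by nlinarith [hsm.1]) (by nlinarith [hsm.2])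
      show Real.log |2 * Real.sin (Real.pi * s)| = SineFact.f s
      unfold SineFact.f
      rw [abs_of_nonneg (by linarith)]
    have h2' : (Real.pi • ∫ s in (0:ℝ)..α, Real.log |2 * Real.sin (Real.pi * s)|)
        = ∫ t in (Real.pi * 0)..(Real.pi * α), Real.log |2 * Real.sin t| :=
      intervalIntegral.smul_integral_comp_mul_left (fun t => Real.log |2 * Real.sin t|) Real.pi
    rw [intervalIntegral.integral_congr hEq, mul_zero,
      intervalIntegral.integral_of_le h0.le, smul_eq_mul] at h2'
    have hmu : ∫ s, SineFact.f s ∂μ = ∫ s in Ioc (0:ℝ) α, SineFact.f s := rfl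
    unfold lob
    rw [hmu, ← h2']
    field_simp
  rw [show -(1/Real.pi) * lob (Real.pi*α) = ∫ s, SineFact.f s ∂μ from hval.symm]
  apply hDCT.congr'
  filter_upwards [eventually_ge_atTop 1] with n hn
  have hn0 : 0 < n := hn
  have hn' : (0:ℝ) < n := by exact_mod_cast hn
  have hstep := SineFact.step_integral hn0 (m n)
  have hIcalc : ∫ s, F n s ∂μ = ∑ j ∈ Finset.Icc 1 (m n), SineFact.f ((j:ℝ)/n) / n := by
    rw [hF]
    rw [MeasureTheory.integral_indicator measurableSet_Ioc, hμ,
      Measure.restrict_restrict measurableSet_Ioc, Set.Ioc_inter_Ioc, max_self,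
      min_eq_left (hmα n)]
    exact hstep.2
  rw [hIcalc, Finset.mul_sum]
  apply Finset.sum_congr rfl
  intro j hj
  unfold SineFact.f
  rw [show Real.pi * ((j:ℝ)/(n:ℝ)) = (j:ℝ)*Real.pi/(n:ℝ) by ring]
  ring
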